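/- With notation as in the CKSVAR reduced form, c̃ = -A*⁻¹(A12; A22)b satisfies c̃₁ = β̃b and c̃₂ = (1-κ)b, where β̃ = (A11 - A12*A22*⁻¹A21)⁻¹(A12*A22*⁻¹A22 - A12) and κ = (Ā₂₂ - A21A11⁻¹Ā₁₂)/(A22* - A21A11⁻¹A12*). -/

import Mathlib

lemma unit_mat_eq (M : Matrix Unit Unit ℝ) : M = M () () • (1 : Matrix Unit Unit ℝ) := by
  ext i j
  simp [Matrix.smul_apply, Matrix.one_apply]

/-- The intercept c̃ = -A*⁻¹(A12; A22)b satisfies c̃₁ = β̃b and c̃₂ = (1-κ)b. -/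
theorem stmt17 (m : ℕ)
    (A11 : Matrix (Fin m) (Fin m) ℝ) (A12 A12s : Matrix (Fin m) Unit ℝ)
    (A21 : Matrix Unit (Fin m) ℝ) (A22 A22s b : ℝ)
    (hA11 : IsUnit A11.det) (hA22s : A22s ≠ 0)
    (hschurS : A22s - (A21 * A11⁻¹ * A12s) () () ≠ 0)
    (hAs : IsUnit (Matrix.fromBlocks A11 A12s A21
      (A22s • (1 : Matrix Unit Unit ℝ))).det)
    (hsw : IsUnit (A11 - A22s⁻¹ • (A12s * A21)).det)
    (βt : Matrix (Fin m) Unit ℝ)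
    (hβt : βt = (A11 - A22s⁻¹ • (A12s * A21))⁻¹ * ((A22 / A22s) • A12s - A12))
    (κ : ℝ)
    (hκ : κ = ((A22 + A22s) - (A21 * A11⁻¹ * (A12 + A12s)) () ()) /
      (A22s - (A21 * A11⁻¹ * A12s) () ()))
    (ctil : Matrix (Fin m ⊕ Unit) Unit ℝ)
    (hc : ctil = -(b • ((Matrix.fromBlocks A11 A12s A21
      (A22s • (1 : Matrix Unit Unit ℝ)))⁻¹ *
      Matrix.fromRows A12 (A22 • (1 : Matrix Unit Unit ℝ))))) :
    ctil.toRows₁ = b • βt ∧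
    ctil.toRows₂ = ((1 - κ) * b) • (1 : Matrix Unit Unit ℝ) := by
  set t : ℝ := (A21 * βt) () () with ht_def
  set p : ℝ := (A21 * A11⁻¹ * A12s) () () with hp_def
  set q : ℝ := (A21 * A11⁻¹ * A12) () () with hq_def
  -- basic equation from hβt
  have eq0 : (A11 - A22s⁻¹ • (A12s * A21)) * βt = (A22 / A22s) • A12s - A12 := by
    rw [hβt, Matrix.mul_nonsing_inv_cancel_left _ _ hsw]
  have hA21βt : A21 * βt = t • (1 : Matrix Unit Unit ℝ) := unit_mat_eq _
  have eqA : A11 * βt = (A22 / A22s) • A12s - A12 + (A22s⁻¹ * t) • A12s := by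
    have : A11 * βt - A22s⁻¹ • (A12s * (A21 * βt)) = (A22 / A22s) • A12s - A12 := by
      rw [← Matrix.mul_assoc, ← Matrix.smul_mul, ← Matrix.sub_mul, eq0]
    rw [hA21βt, Matrix.mul_smul, Matrix.mul_one, smul_smul] at this
    linear_combination (norm := module) this
  -- multiply by A21 * A11⁻¹ on the left
  have eqB : A21 * βt =
      A21 * A11⁻¹ * ((A22 / A22s) • A12s - A12 + (A22s⁻¹ * t) • A12s) := by
    rw [← eqA, Matrix.mul_assoc, Matrix.nonsing_inv_mul_cancel_left _ _ hA11]
  have ht : t = (A22 / A22s) * p - q + (A22s⁻¹ * t) * p := by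
    have := congrArg (fun M : Matrix Unit Unit ℝ => M () ()) eqB
    simpa [Matrix.mul_sub, Matrix.mul_add, Matrix.mul_smul, Matrix.sub_apply,
      Matrix.add_apply, Matrix.smul_apply, smul_eq_mul, ht_def, hp_def, hq_def] using this
  have ht' : t * A22s = A22 * p - q * A22s + t * p := by
    field_simp at ht
    linarith [ht]
  have hqp : (A21 * A11⁻¹ * (A12 + A12s)) () () = q + p := by
    rw [Matrix.mul_add, Matrix.add_apply]
  -- key scalar identity
  have key : t + (1 - κ) * A22s + A22 = 0 := by
    have hκ2 : κ * (A22s - p) = A22 + A22s - (q + p) := by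
      rw [hκ, hqp]
      field_simp
    have h0 : (t + (1 - κ) * A22s + A22) * (A22s - p) = 0 := by
      linear_combination ht' - A22s * hκ2
    exact (mul_eq_zero.mp h0).resolve_right hschurS
  -- the candidate solution
  set As := Matrix.fromBlocks A11 A12s A21 (A22s • (1 : Matrix Unit Unit ℝ)) with hAsdef
  set x : Matrix (Fin m ⊕ Unit) Unit ℝ :=
    Matrix.fromRows (b • βt) (((1 - κ) * b) • (1 : Matrix Unit Unit ℝ)) with hx
  have hAx : As * x = -(b • Matrix.fromRows A12 (A22 • (1 : Matrix Unit Unit ℝ))) := by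
    rw [hx, hAsdef, Matrix.fromBlocks_mul_fromRows]
    have h1 : A11 * (b • βt) + A12s * (((1 - κ) * b) • (1 : Matrix Unit Unit ℝ))
        = -(b • A12) := by
      rw [Matrix.mul_smul, Matrix.mul_smul, Matrix.mul_one, eqA]
      have hcoef : A22 / A22s + A22s⁻¹ * t + (1 - κ) = 0 := by
        field_simp
        linarith [key]
      have hz : (A22 / A22s + A22s⁻¹ * t + (1 - κ)) • A12s = 0 := by
        rw [hcoef, zero_smul]
      linear_combination (norm := module) b • hz
    have h2 : A21 * (b • βt) + (A22s • (1 : Matrix Unit Unit ℝ)) *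
        (((1 - κ) * b) • (1 : Matrix Unit Unit ℝ))
        = -(b • (A22 • (1 : Matrix Unit Unit ℝ))) := by
      rw [Matrix.mul_smul, hA21βt, Matrix.mul_smul, Matrix.smul_mul, Matrix.mul_one,
        smul_smul, smul_smul, smul_smul, ← add_smul, ← neg_smul]
      congr 1
      linear_combination b * key
    rw [h1, h2]
    ext (i | i) j <;>
      simp [Matrix.fromRows_apply_inl, Matrix.fromRows_apply_inr, Matrix.neg_apply, Matrix.smul_apply]
  have hctil : ctil = x := by
    have hrw : -(b • (As⁻¹ * Matrix.fromRows A12 (A22 • (1 : Matrix Unit Unit ℝ))))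
        = As⁻¹ * (-(b • Matrix.fromRows A12 (A22 • (1 : Matrix Unit Unit ℝ)))) := by
      rw [Matrix.mul_neg, Matrix.mul_smul]
    rw [hc, hrw, ← hAx, Matrix.nonsing_inv_mul_cancel_left _ _ hAs]
  rw [hctil, hx]
  exact ⟨rfl, rfl⟩
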